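/- Let S be a set of n ≥ 2 generators, d ∈ (0,1), B ≥ 1, and 0 ≤ P < B. Let 𝓛 be a language of reduced words over S and k > (2n−1)^{1−d} a real number such that, for some c > 0, |𝓛 ∩ R_L| ≥ c·k^L for all but finitely many L with L ≡ P (mod B). Then the probability that a random set of relators at density d and length L contains at least one element of 𝓛 tends to 1 as L → ∞ along integers L with L ≡ P (mod B). -/

import Mathlib

open Filter Topology

/-- The symmetrized alphabet `S ∪ S⁻¹` for a set `S` of `n` generators. -/
abbrev Letter (n : ℕ) := Fin n × Bool

/-- The formal inverse of a letter. -/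
def linv {n : ℕ} (a : Letter n) : Letter n := (a.1, !a.2)

/-- A word is reduced if no two consecutive letters are inverse to each other. -/
def Reduced {n : ℕ} (w : List (Letter n)) : Prop :=
  w.Chain' fun a b => b ≠ linv a

/-- The set of all reduced words of length `L` over `n` generators. -/
def RW (n L : ℕ) : Set (List (Letter n)) :=
  {w | w.length = L ∧ Reduced w}

/-- The number `⌊(2n-1)^(dL)⌋` of relators in a random set of relators at density `d`
and length `L`. -/
noncomputable def numRelators (n : ℕ) (d : ℝ) (L : ℕ) : ℕ :=
  ⌊(2 * (n : ℝ) - 1) ^ (d * (L : ℝ))⌋₊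

/-- The probability that a `⌊(2n-1)^(dL)⌋`-tuple of reduced words of length `l`,
chosen independently and uniformly at random, contains at least one element of `L`. -/
noncomputable def hitProb (n : ℕ) (d : ℝ) (L : Set (List (Letter n))) (l : ℕ) : ℝ :=
  (Nat.card {f : Fin (numRelators n d l) → ↥(RW n l) // ∃ i, (f i : List (Letter n)) ∈ L} : ℝ) /
    (Nat.card ↥(RW n l) : ℝ) ^ (numRelators n d l)

/-! ### Auxiliary lemmas -/

lemma rw_finite (n l : ℕ) : (RW n l).Finite :=
  (List.finite_length_eq (Letter n) l).subset fun _ hw => hw.1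

instance rwFinite (n l : ℕ) : Finite ↥(RW n l) := (rw_finite n l).to_subtype

lemma rw_nonempty (n l : ℕ) (hn : 1 ≤ n) : (RW n l).Nonempty := by
  refine ⟨List.replicate l ((⟨0, hn⟩ : Fin n), true), List.length_replicate, ?_⟩
  induction l with
  | zero => exact List.isChain_nil
  | succ m ih =>
    cases m with
    | zero => exact List.isChain_singleton _
    | succ m' =>
      rw [List.replicate_succ] at ih ⊢
      rw [List.replicate_succ]
      refine List.isChain_cons_cons.2 ⟨?_, ih⟩
      simp [linv]

lemma card_rw_pos (n l : ℕ) (hn : 1 ≤ n) : 0 < Nat.card ↥(RW n l) := by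
  haveI := (rw_nonempty n l hn).to_subtype
  exact Nat.card_pos

lemma linv_linv {n : ℕ} (a : Letter n) : linv (linv a) = a := by
  simp [linv]

lemma card_avoid (n : ℕ) (x : Letter n) :
    Fintype.card {a : Letter n // a ≠ x} = 2 * n - 1 := by
  have : Fintype.card {a : Letter n // a ≠ x}
      = Fintype.card (Letter n) - Fintype.card {a : Letter n // a = x} :=
    Fintype.card_subtype_compl _
  rw [this, Fintype.card_subtype_eq]
  simp [Fintype.card_prod]
  omega

lemma card_rw_succ_le (n l : ℕ) (hn : 1 ≤ n) (hl : 1 ≤ l) :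
    Nat.card ↥(RW n (l + 1)) ≤ (2 * n - 1) * Nat.card ↥(RW n l) := by
  haveI : Inhabited (Letter n) := ⟨((⟨0, hn⟩ : Fin n), true)⟩
  have e : ∀ x : Letter n, {a : Letter n // a ≠ x} ≃ Fin (2 * n - 1) :=
    fun x => Fintype.equivFinOfCardEq (card_avoid n x)
  have decomp : ∀ w : ↥(RW n (l + 1)), ∃ a b t, w.val = a :: b :: t := by
    rintro ⟨w, hlen, hred⟩
    match w, hlen with
    | a :: b :: t, _ => exact ⟨a, b, t, rfl⟩
    | [a], hlen => simp at hlen; omega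
  have key : Nat.card ↥(RW n (l + 1)) ≤ Nat.card (↥(RW n l) × Fin (2 * n - 1)) := by
    have htail : ∀ w : ↥(RW n (l + 1)), w.val.tail ∈ RW n l := by
      rintro ⟨w, hlen, hred⟩
      exact ⟨by simp [List.length_tail, hlen], hred.tail⟩
    have hhead : ∀ w : ↥(RW n (l + 1)), w.val.head! ≠ linv w.val.tail.head! := by
      intro w
      obtain ⟨a, b, t, hw⟩ := decomp w
      have hred := w.2.2
      rw [hw] at hred ⊢
      simp only [List.head!_cons, List.tail_cons]
      have hba : b ≠ linv a := (List.isChain_cons_cons.1 hred).1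
      intro hab
      exact hba (by rw [hab, linv_linv])
    set F : ↥(RW n (l + 1)) → ↥(RW n l) × Fin (2 * n - 1) :=
      fun w => (⟨w.val.tail, htail w⟩, e (linv w.val.tail.head!) ⟨w.val.head!, hhead w⟩) with hF
    have hFinj : Function.Injective F := by
      intro w₁ w₂ h
      obtain ⟨h1, h2⟩ := Prod.mk.injEq .. ▸ h
      have htl : w₁.val.tail = w₂.val.tail := congrArg Subtype.val h1
      have aux : ∀ x₁ x₂ : Letter n, x₁ = x₂ →
          ∀ (a₁ : {a : Letter n // a ≠ x₁}) (a₂ : {a : Letter n // a ≠ x₂}),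
          e x₁ a₁ = e x₂ a₂ → (a₁ : Letter n) = a₂ := by
        rintro x₁ _ rfl a₁ a₂ hh
        exact congrArg Subtype.val ((e x₁).injective hh)
      have hhd : w₁.val.head! = w₂.val.head! :=
        aux _ _ (by rw [htl]) _ _ h2
      have hne₁ : w₁.val ≠ [] := by obtain ⟨a, b, t, hw⟩ := decomp w₁; simp [hw]
      have hne₂ : w₂.val ≠ [] := by obtain ⟨a, b, t, hw⟩ := decomp w₂; simp [hw]
      apply Subtype.ext
      rw [← List.cons_head!_tail hne₁, ← List.cons_head!_tail hne₂, hhd, htl]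
    exact Nat.card_le_card_of_injective F hFinj
  rw [Nat.card_prod] at key
  simpa [Nat.card_eq_fintype_card, mul_comm] using key

lemma card_rw_le (n : ℕ) (hn : 2 ≤ n) (l : ℕ) :
    Nat.card ↥(RW n l) ≤ 2 * (2 * n - 1) ^ l := by
  induction l with
  | zero =>
    have hsub' : (RW n 0).Subsingleton := by
      rintro w ⟨hw, -⟩ v ⟨hv, -⟩
      rw [List.length_eq_zero_iff.1 hw, List.length_eq_zero_iff.1 hv]
    haveI hsub : Subsingleton ↥(RW n 0) := hsub'.coe_sort
    calc Nat.card ↥(RW n 0) ≤ Nat.card Unit :=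
          Nat.card_le_card_of_injective (fun _ => ()) (fun a b _ => Subsingleton.elim a b)
    _ = 1 := Nat.card_unique
    _ ≤ 2 * (2 * n - 1) ^ 0 := by norm_num
  | succ m ih =>
    rcases Nat.eq_zero_or_pos m with rfl | hm
    · haveI : Inhabited (Letter n) := ⟨((⟨0, by omega⟩ : Fin n), true)⟩
      have key : Nat.card ↥(RW n 1) ≤ Nat.card (Letter n) := by
        apply Nat.card_le_card_of_injective (fun w => w.val.head!)
        intro w₁ w₂ heq
        obtain ⟨a, ha⟩ := List.length_eq_one_iff.1 w₁.2.1
        obtain ⟨b, hb⟩ := List.length_eq_one_iff.1 w₂.2.1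
        apply Subtype.ext
        rw [ha, hb]
        simp only [ha, hb, List.head!_cons] at heq
        rw [heq]
      have : Nat.card (Letter n) = 2 * n := by
        simp [Nat.card_eq_fintype_card, Fintype.card_prod]; omega
      rw [this] at key
      calc Nat.card ↥(RW n 1) ≤ 2 * n := key
      _ ≤ 2 * (2 * n - 1) ^ 1 := by rw [pow_one]; omega
    · calc Nat.card ↥(RW n (m + 1)) ≤ (2 * n - 1) * Nat.card ↥(RW n m) :=
            card_rw_succ_le n m (by omega) hm
      _ ≤ (2 * n - 1) * (2 * (2 * n - 1) ^ m) := Nat.mul_le_mul_left _ ih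
      _ = 2 * (2 * n - 1) ^ (m + 1) := by ring

lemma card_inter_le (n l : ℕ) (L : Set (List (Letter n))) :
    Nat.card ↥(L ∩ RW n l) ≤ Nat.card ↥(RW n l) :=
  Nat.card_le_card_of_injective (Set.inclusion Set.inter_subset_right)
    (Set.inclusion_injective _)

lemma hitProb_eq (n : ℕ) (d : ℝ) (L : Set (List (Letter n))) (l : ℕ)
    (hR : 0 < Nat.card ↥(RW n l)) :
    hitProb n d L l = 1 - ((1 : ℝ) -
      (Nat.card ↥(L ∩ RW n l) : ℝ) / (Nat.card ↥(RW n l) : ℝ)) ^ (numRelators n d l) := by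
  classical
  set N := numRelators n d l with hN
  set R := Nat.card ↥(RW n l) with hRdef
  set A := Nat.card ↥(L ∩ RW n l) with hA
  letI : Fintype ↥(RW n l) := (rw_finite n l).fintype
  have hin : Fintype.card {w : ↥(RW n l) // (w : List (Letter n)) ∈ L} = A := by
    rw [hA, ← Nat.card_eq_fintype_card]
    apply Nat.card_congr
    exact (Equiv.subtypeSubtypeEquivSubtypeInter _ _).trans
      (Equiv.setCongr (by ext w; exact and_comm))
  have hout : Fintype.card {w : ↥(RW n l) // ¬ ((w : List (Letter n)) ∈ L)} = R - A := by
    rw [Fintype.card_subtype_compl, hin, hRdef, Nat.card_eq_fintype_card]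
  have havoid : Nat.card {f : Fin N → ↥(RW n l) // ∀ i, ¬ ((f i : List (Letter n)) ∈ L)}
      = (R - A) ^ N := by
    have e1 : {f : Fin N → ↥(RW n l) // ∀ i, ¬ ((f i : List (Letter n)) ∈ L)}
        ≃ (Fin N → {w : ↥(RW n l) // ¬ ((w : List (Letter n)) ∈ L)}) :=
      Equiv.subtypePiEquivPi (p := fun (_ : Fin N) (w : ↥(RW n l)) => (w : List (Letter n)) ∉ L)
    rw [Nat.card_congr e1, Nat.card_pi]
    simp [← hout, Nat.card_eq_fintype_card]
  have hhit : Nat.card {f : Fin N → ↥(RW n l) // ∃ i, (f i : List (Letter n)) ∈ L}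
      = R ^ N - (R - A) ^ N := by
    have h1 : Nat.card {f : Fin N → ↥(RW n l) // ∃ i, (f i : List (Letter n)) ∈ L}
        = Fintype.card {f : Fin N → ↥(RW n l) // ¬ ∀ i, ¬ ((f i : List (Letter n)) ∈ L)} := by
      rw [Nat.card_eq_fintype_card]
      apply Fintype.card_congr
      exact Equiv.subtypeEquivRight (fun f => by push_neg; rfl)
    rw [h1, Fintype.card_subtype_compl]
    have h2 : Fintype.card {f : Fin N → ↥(RW n l) // ∀ i, ¬ ((f i : List (Letter n)) ∈ L)}
        = (R - A) ^ N := by rw [← Nat.card_eq_fintype_card]; exact havoid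
    rw [h2, Fintype.card_fun, Fintype.card_fin, ← Nat.card_eq_fintype_card, ← hRdef]
  have hAR : A ≤ R := card_inter_le n l L
  have hpow : (R - A) ^ N ≤ R ^ N := Nat.pow_le_pow_left (Nat.sub_le _ _) N
  have hRpos : (0:ℝ) < (R : ℝ) := by exact_mod_cast hR
  rw [hitProb, ← hN, ← hRdef, hhit]
  rw [Nat.cast_sub hpow, Nat.cast_pow, Nat.cast_pow, Nat.cast_sub hAR]
  have hRNpos : (0:ℝ) < (R:ℝ) ^ N := pow_pos hRpos N
  field_simp
  rw [div_pow, mul_sub, mul_one, mul_div_cancel₀ _ hRNpos.ne']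

/-- If a language `𝓛` of reduced words over `n ≥ 2` generators has `I_P`-growth rate at
least `k > (2n-1)^(1-d)` (i.e. `|𝓛 ∩ R_L| ≥ c·k^L` for all but finitely many
`L ≡ P (mod B)`), then a random set of relators at density `d` and length `L` meets `𝓛`
with probability tending to `1` as `L → ∞` along `L ≡ P (mod B)`. -/
theorem random_relators_meet_language_mod (n : ℕ) (hn : 2 ≤ n)
    (d : ℝ) (hd : d ∈ Set.Ioo (0 : ℝ) 1)
    (B P : ℕ) (hB : 1 ≤ B) (hP : P < B)
    (L : Set (List (Letter n))) (hred : ∀ w ∈ L, Reduced w)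
    (k : ℝ) (hk : (2 * (n : ℝ) - 1) ^ ((1 : ℝ) - d) < k)
    (c : ℝ) (hc : 0 < c)
    (hgrowth : ∀ᶠ Lhat : ℕ in atTop,
      c * k ^ (B * Lhat + P) ≤ (Nat.card ↥(L ∩ RW n (B * Lhat + P)) : ℝ)) :
    Tendsto (fun Lhat : ℕ => hitProb n d L (B * Lhat + P)) atTop (𝓝 1) := by
  obtain ⟨hd0, hd1⟩ := hd
  set t : ℝ := 2 * (n : ℝ) - 1 with ht_def
  have hn2 : (2:ℝ) ≤ (n:ℝ) := by exact_mod_cast hn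
  have ht3 : (3:ℝ) ≤ t := by rw [ht_def]; linarith
  have ht1 : (1:ℝ) < t := by linarith
  have ht0 : (0:ℝ) < t := by linarith
  have hk0 : (0:ℝ) < k := lt_trans (Real.rpow_pos_of_pos ht0 _) hk
  set ρ : ℝ := k * t ^ (d - 1) with hρ_def
  have hρ1 : 1 < ρ := by
    have h1 : t ^ ((1:ℝ) - d) * t ^ (d - 1) < k * t ^ (d - 1) :=
      mul_lt_mul_of_pos_right hk (Real.rpow_pos_of_pos ht0 _)
    have h2 : t ^ ((1:ℝ) - d) * t ^ (d - 1) = 1 := by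
      rw [← Real.rpow_add ht0]
      norm_num
    show (1:ℝ) < k * t ^ (d - 1)
    calc (1:ℝ) = t ^ ((1:ℝ) - d) * t ^ (d - 1) := h2.symm
    _ < k * t ^ (d - 1) := h1
  -- the "miss" function
  set q : ℕ → ℝ := fun l =>
    (Nat.card ↥(L ∩ RW n l) : ℝ) / (Nat.card ↥(RW n l) : ℝ) with hq_def
  have hR0 : ∀ l, (0:ℝ) < (Nat.card ↥(RW n l) : ℝ) := fun l => by
    exact_mod_cast card_rw_pos n l (by omega)
  have hq01 : ∀ l, 0 ≤ q l ∧ q l ≤ 1 := by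
    intro l
    constructor
    · exact div_nonneg (Nat.cast_nonneg _) (Nat.cast_nonneg _)
    · rw [hq_def]
      rw [div_le_one (hR0 l)]
      exact_mod_cast card_inter_le n l L
  -- Key pointwise estimate
  have key : ∀ᶠ Lhat : ℕ in atTop,
      (1 - q (B * Lhat + P)) ^ numRelators n d (B * Lhat + P)
        ≤ Real.exp (-(c/4) * ρ ^ (B * Lhat + P)) := by
    filter_upwards [hgrowth] with Lhat hg
    set l := B * Lhat + P with hl_def
    set N := numRelators n d l with hN_def
    set x : ℝ := t ^ (d * (l:ℝ)) with hx_def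
    have hx1 : (1:ℝ) ≤ x := Real.one_le_rpow ht1.le (by positivity)
    have hN1 : 1 ≤ N := Nat.le_floor (by rw [Nat.cast_one]; exact hx1)
    have hNhalf : x / 2 ≤ (N:ℝ) := by
      have h1 : x < (N:ℝ) + 1 := Nat.lt_floor_add_one x
      have h2 : (1:ℝ) ≤ (N:ℝ) := by exact_mod_cast hN1
      linarith
    -- lower bound on q
    have hR2 : (Nat.card ↥(RW n l) : ℝ) ≤ 2 * t ^ l := by
      have := card_rw_le n hn l
      have hcast : ((2 * (2 * n - 1) ^ l : ℕ) : ℝ) = 2 * t ^ l := by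
        push_cast [Nat.cast_sub (by omega : 1 ≤ 2 * n)]
        rw [ht_def]
      rw [← hcast]
      exact_mod_cast this
    have hqlow : c * k ^ l / (2 * t ^ l) ≤ q l := by
      exact div_le_div₀ (Nat.cast_nonneg _) hg (hR0 l) hR2
    -- N * q ≥ (c/4) ρ^l
    have hprod : (c/4) * ρ ^ l ≤ (N:ℝ) * q l := by
      have hmul : (x / 2) * (c * k ^ l / (2 * t ^ l)) ≤ (N:ℝ) * q l := by
        apply mul_le_mul hNhalf hqlow
        · positivity
        · positivity
      refine le_trans (le_of_eq ?_) hmul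
      have hxt : x / t ^ l = t ^ ((d - 1) * (l:ℝ)) := by
        rw [hx_def, ← Real.rpow_natCast t l, ← Real.rpow_sub ht0]
        ring_nf
      have hρl : ρ ^ l = k ^ l * t ^ ((d - 1) * (l:ℝ)) := by
        rw [hρ_def, mul_pow, ← Real.rpow_natCast (t ^ (d - 1)) l, ← Real.rpow_mul ht0.le]
      rw [hρl, ← hxt]
      have htl0 : (0:ℝ) < t ^ l := by positivity
      field_simp
      ring
    -- conclude
    have hq0 := (hq01 l).1
    have hq1 := (hq01 l).2
    calc (1 - q l) ^ N ≤ Real.exp (-(q l)) ^ N := by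
          apply pow_le_pow_left₀ (by linarith)
          linarith [Real.add_one_le_exp (-(q l))]
    _ = Real.exp ((N:ℕ) * (-(q l))) := by rw [← Real.exp_nat_mul]
    _ ≤ Real.exp (-(c/4) * ρ ^ l) := by
          apply Real.exp_le_exp.2
          have : (N:ℝ) * (-(q l)) = -((N:ℝ) * q l) := by ring
          rw [this, neg_mul]
          exact neg_le_neg hprod
  -- the bounding sequence tends to 0
  have hbound : Tendsto (fun Lhat : ℕ => Real.exp (-(c/4) * ρ ^ (B * Lhat + P))) atTop (𝓝 0) := by
    have h1 : Tendsto (fun Lhat : ℕ => ρ ^ (B * Lhat + P)) atTop atTop :=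
      (tendsto_pow_atTop_atTop_of_one_lt hρ1).comp
        (tendsto_atTop_mono
          (fun x => le_trans (Nat.le_mul_of_pos_left x (show 0 < B by omega)) (Nat.le_add_right _ _))
          tendsto_id)
    have h2 : Tendsto (fun y : ℝ => Real.exp (-(c/4) * y)) atTop (𝓝 0) := by
      apply Real.tendsto_exp_atBot.comp
      have h := (tendsto_id (α := ℝ)).const_mul_atTop (show (0:ℝ) < c/4 by positivity)
      have h3 := tendsto_neg_atTop_atBot.comp h
      exact h3.congr fun x => by simp [Function.comp, neg_mul]
    exact h2.comp h1
  -- the miss probability tends to 0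
  have hmiss : Tendsto
      (fun Lhat : ℕ => (1 - q (B * Lhat + P)) ^ numRelators n d (B * Lhat + P))
      atTop (𝓝 0) := by
    apply squeeze_zero' ?_ key hbound
    filter_upwards with Lhat
    exact pow_nonneg (by linarith [(hq01 (B * Lhat + P)).2]) _
  -- conclude
  have hfinal : Tendsto
      (fun Lhat : ℕ => 1 - (1 - q (B * Lhat + P)) ^ numRelators n d (B * Lhat + P))
      atTop (𝓝 1) := by
    have := tendsto_const_nhds (x := (1:ℝ)) (f := atTop (α := ℕ)) |>.sub hmiss
    simpa using this
  apply hfinal.congr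
  intro Lhat
  rw [hitProb_eq n d L (B * Lhat + P) (card_rw_pos n _ (by omega))]
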